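/- arXiv:1101.4166 — 2 statements merged into one kernel-verified Lean document; each statement's English description precedes it below -/
import Mathlib

section
/- Let $f \in L^\infty(m)$ satisfy $\mathcal{P}^t_\varepsilon f = e^{\lambda t} f$ for all $t \ge 0$, with $\lambda < 0$, normalized so that $\int |f|\,dm = 2$ and $\int f\, dm = 0$. Let $A^+ = \{f \ge 0\}$. Then for every integer $k \ge 0$ and $t > 0$: $\mathrm{Prob}_\nu(X(\ell t) \in A^+ \text{ for } \ell = 0,\ldots,k) \ge e^{\lambda k t}$, where $\nu$ is the signed measure with density $f$; consequently the upper escape rate from $A^+$ with respect to Lebesgue measure satisfies $\bar{E}_\varepsilon(A^+) \le -t\lambda$. -/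
open MeasureTheory Filter Topology

/-- If `𝒫ᵗ_ε f = e^{λ t} f` with `λ < 0`, `∫|f| = 2`, `∫ f = 0`, and `A⁺ = {f ≥ 0}`, then
`Prob_ν(X(ℓt) ∈ A⁺, ℓ = 0,…,k) ≥ e^{λ k t}` for all `k`, where `ν` has density `f`, and the
upper escape rate of `A⁺` with respect to Lebesgue measure satisfies `Ē_ε(A⁺) ≤ -tλ`. -/
theorem stmt9 {M : Type*} [MeasurableSpace M] (m : Measure M)
    (P : ℝ → ((M → ℝ) →ₗ[ℝ] (M → ℝ)))
    (hpos : ∀ t ≥ (0:ℝ), ∀ g : M → ℝ, (∀ x, 0 ≤ g x) → ∀ x, 0 ≤ (P t) g x)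
    (hint : ∀ t ≥ (0:ℝ), ∀ g : M → ℝ, Integrable g m →
      Integrable ((P t) g) m ∧ ∫ x, (P t) g x ∂m = ∫ x, g x ∂m)
    (f : M → ℝ) (hfint : Integrable f m) (hfbdd : ∃ C, ∀ x, |f x| ≤ C)
    (lam : ℝ) (hlam : lam < 0)
    (heig : ∀ t ≥ (0:ℝ), (P t) f = fun x => Real.exp (lam * t) * f x)
    (hnorm : ∫ x, |f x| ∂m = 2) (hzero : ∫ x, f x ∂m = 0)
    (t : ℝ) (ht : 0 < t)
    (Ap : Set M) (hAp : Ap = {x | 0 ≤ f x}) :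
    (∀ k : ℕ, Real.exp (lam * k * t)
        ≤ ∫ x in Ap, ((fun h : M → ℝ => (P t) (Ap.indicator h))^[k] f) x ∂m) ∧
    -Filter.liminf (fun k : ℕ => (1 / (k : ℝ)) *
        Real.log (∫ x in Ap,
          ((fun h : M → ℝ => (P t) (Ap.indicator h))^[k] (fun _ => (1:ℝ))) x ∂m))
      Filter.atTop ≤ -t * lam := by
  obtain ⟨C₀, hC₀⟩ := hfbdd
  set C : ℝ := max C₀ 1 with hCdef
  have hC1 : (1:ℝ) ≤ C := le_max_right _ _
  have hC : ∀ x, |f x| ≤ C := fun x => (hC₀ x).trans (le_max_left _ _)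
  have hCpos : (0:ℝ) < C := lt_of_lt_of_le one_pos hC1
  -- a measurable representative of f
  obtain ⟨f', hf'meas, hff'⟩ := hfint.1
  set Ap' : Set M := {x | 0 ≤ f' x} with hAp'
  have hAp'm : MeasurableSet Ap' := measurableSet_le measurable_const hf'meas.measurable
  have hApAe : Ap =ᶠ[ae m] Ap' := by
    rw [eventuallyEq_set]
    filter_upwards [hff'] with x hx
    simp [hAp, hAp', hx]
  have hrestr : m.restrict Ap = m.restrict Ap' := Measure.restrict_congr_set hApAe
  have hindae : ∀ g : M → ℝ, Ap'.indicator g =ᶠ[ae m] Ap.indicator g := by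
    intro g
    filter_upwards [eventuallyEq_set.mp hApAe] with x hx
    by_cases h : x ∈ Ap
    · rw [Set.indicator_of_mem h, Set.indicator_of_mem (hx.mp h)]
    · rw [Set.indicator_of_notMem h, Set.indicator_of_notMem (fun h' => h (hx.mpr h'))]
  set Q : (M → ℝ) → (M → ℝ) := fun h => (P t) (Ap.indicator h) with hQ
  -- Q is pointwise monotone
  have hQmono : ∀ a b : M → ℝ, (∀ x, a x ≤ b x) → ∀ x, Q a x ≤ Q b x := by
    intro a b hab x
    have h1 : ∀ y, 0 ≤ (P t) (Ap.indicator b - Ap.indicator a) y := by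
      apply hpos t ht.le
      intro y
      by_cases hy : y ∈ Ap
      · simp only [Pi.sub_apply, Set.indicator_of_mem hy, sub_nonneg]
        exact hab y
      · simp [Set.indicator_of_notMem hy]
    have h2 := h1 x
    rw [map_sub] at h2
    simpa [sub_nonneg] using h2
  -- Q commutes with scalar multiplication
  have hQsmul : ∀ (c : ℝ) (h : M → ℝ), Q (fun x => c * h x) = fun x => c * Q h x := by
    intro c h
    have h1 : Ap.indicator (fun x => c * h x) = c • Ap.indicator h := by
      funext x
      by_cases hx : x ∈ Ap <;>
        simp [Set.indicator_of_mem, Set.indicator_of_notMem, hx]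
    simp only [hQ, h1, _root_.map_smul]
    funext x
    simp
  -- Q f dominates e^{λt} f pointwise
  have hQf : ∀ x, Real.exp (lam * t) * f x ≤ Q f x := by
    intro x
    have hind : ∀ y, 0 ≤ (Ap.indicator f - f) y := by
      intro y
      by_cases hy : y ∈ Ap
      · simp [Set.indicator_of_mem hy]
      · have hfy : f y < 0 := by
          rw [hAp] at hy
          simpa using not_le.mp (by simpa using hy)
        simp only [Pi.sub_apply, Set.indicator_of_notMem hy]
        linarith
    have h2 := hpos t ht.le _ hind x
    rw [map_sub, heig t ht.le] at h2
    simpa [sub_nonneg, hQ] using h2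
  -- main induction
  have key : ∀ k : ℕ, Integrable (Q^[k] f) m ∧
      (∀ x, Real.exp (lam * k * t) * f x ≤ Q^[k] f x) ∧
      (∀ x, Q^[k] f x ≤ C * Q^[k] (fun _ => (1:ℝ)) x) := by
    intro k
    induction k with
    | zero =>
      refine ⟨hfint, fun x => by simp, fun x => ?_⟩
      simp only [Function.iterate_zero, id]
      calc f x ≤ |f x| := le_abs_self _
        _ ≤ C := hC x
        _ = C * 1 := (mul_one C).symm
    | succ k ih =>
      obtain ⟨ihint, ihlow, ihup⟩ := ih
      have hindint : Integrable (Ap.indicator (Q^[k] f)) m :=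
        (ihint.indicator hAp'm).congr (hindae _)
      have hPk := hint t ht.le _ hindint
      refine ⟨?_, ?_, ?_⟩
      · rw [Function.iterate_succ_apply']
        exact hPk.1
      · intro x
        rw [Function.iterate_succ_apply']
        have step2 : Q (fun y => Real.exp (lam * k * t) * f y) x ≤ Q (Q^[k] f) x :=
          hQmono _ _ ihlow x
        have step3 : Q (fun y => Real.exp (lam * k * t) * f y) x
            = Real.exp (lam * k * t) * Q f x := by rw [hQsmul]
        have step4 : Real.exp (lam * k * t) * (Real.exp (lam * t) * f x)
            ≤ Real.exp (lam * k * t) * Q f x :=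
          mul_le_mul_of_nonneg_left (hQf x) (Real.exp_nonneg _)
        have harith : Real.exp (lam * (k + 1 : ℕ) * t) * f x
            = Real.exp (lam * k * t) * (Real.exp (lam * t) * f x) := by
          rw [← mul_assoc, ← Real.exp_add]
          push_cast
          ring_nf
        calc Real.exp (lam * (k + 1 : ℕ) * t) * f x
            = Real.exp (lam * k * t) * (Real.exp (lam * t) * f x) := harith
          _ ≤ Real.exp (lam * k * t) * Q f x := step4
          _ = Q (fun y => Real.exp (lam * k * t) * f y) x := step3.symm
          _ ≤ Q (Q^[k] f) x := step2
      · intro x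
        rw [Function.iterate_succ_apply', Function.iterate_succ_apply']
        have step2 : Q (Q^[k] f) x ≤ Q (fun y => C * Q^[k] (fun _ => (1:ℝ)) y) x :=
          hQmono _ _ ihup x
        have step3 : Q (fun y => C * Q^[k] (fun _ => (1:ℝ)) y) x
            = C * Q (Q^[k] (fun _ => (1:ℝ))) x := by rw [hQsmul]
        calc Q (Q^[k] f) x ≤ Q (fun y => C * Q^[k] (fun _ => (1:ℝ)) y) x := step2
          _ = C * Q (Q^[k] (fun _ => (1:ℝ))) x := step3
  -- ∫_{Ap} f = 1
  have hintf1 : ∫ x in Ap, f x ∂m = 1 := by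
    rw [hrestr]
    have hf'int : Integrable f' m := hfint.congr hff'
    have habs : (fun x => |f x|) =ᶠ[ae m] (fun x => |f' x|) := by
      filter_upwards [hff'] with x hx
      rw [hx]
    have hzero' : ∫ x, f' x ∂m = 0 := by
      rw [← integral_congr_ae hff']; exact hzero
    have hnorm' : ∫ x, |f' x| ∂m = 2 := by
      rw [← integral_congr_ae habs]; exact hnorm
    have h1 : ∫ x in Ap', f x ∂m = ∫ x in Ap', f' x ∂m :=
      integral_congr_ae (ae_restrict_of_ae hff')
    rw [h1, ← integral_indicator hAp'm]
    have h2 : Ap'.indicator f' = fun x => (f' x + |f' x|) / 2 := by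
      funext x
      by_cases hx : x ∈ Ap'
      · have h0 : 0 ≤ f' x := hx
        rw [Set.indicator_of_mem hx, abs_of_nonneg h0]
        ring
      · have h0 : f' x < 0 := not_le.mp hx
        rw [Set.indicator_of_notMem hx, abs_of_neg h0]
        ring
    rw [h2]
    have : ∫ x, (f' x + |f' x|) / 2 ∂m = (∫ x, f' x ∂m + ∫ x, |f' x| ∂m) / 2 := by
      rw [integral_div, integral_add hf'int hf'int.abs]
    rw [this, hzero', hnorm']
    norm_num
  -- Part 1
  have part1 : ∀ k : ℕ, Real.exp (lam * k * t) ≤ ∫ x in Ap, (Q^[k] f) x ∂m := by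
    intro k
    obtain ⟨hkint, hklow, _⟩ := key k
    have h1 : ∫ x in Ap, Real.exp (lam * k * t) * f x ∂m ≤ ∫ x in Ap, Q^[k] f x ∂m :=
      integral_mono ((hfint.restrict).const_mul _) hkint.restrict hklow
    rwa [integral_const_mul, hintf1, mul_one] at h1
  refine ⟨part1, ?_⟩
  -- Part 2
  set v : ℕ → ℝ := fun k => (1 / (k : ℝ)) *
      Real.log (∫ x in Ap, (Q^[k] (fun _ => (1:ℝ))) x ∂m) with hv
  have hTlam : lam * t < 0 := mul_neg_of_neg_of_pos hlam ht
  have hlogC : 0 ≤ Real.log C := Real.log_nonneg hC1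
  have hlow : ∀ᶠ k : ℕ in atTop, lam * t - Real.log C / k ≤ v k := by
    filter_upwards [eventually_ge_atTop 1] with k hk
    have hk0 : (0:ℝ) < k := by exact_mod_cast hk
    by_cases hSk : Integrable (Q^[k] (fun _ => (1:ℝ))) (m.restrict Ap)
    · have h1 : ∫ x in Ap, Q^[k] f x ∂m
          ≤ ∫ x in Ap, C * Q^[k] (fun _ => (1:ℝ)) x ∂m :=
        integral_mono (key k).1.restrict (hSk.const_mul C) (key k).2.2
      rw [integral_const_mul] at h1
      have h2 : Real.exp (lam * k * t) ≤ C * ∫ x in Ap, Q^[k] (fun _ => (1:ℝ)) x ∂m :=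
        le_trans (part1 k) h1
      set S := ∫ x in Ap, Q^[k] (fun _ => (1:ℝ)) x ∂m with hSdef
      have hSpos : 0 < S := by
        nlinarith [Real.exp_pos (lam * k * t)]
      have h3 : Real.exp (lam * k * t) / C ≤ S := (div_le_iff₀ hCpos).mpr (by linarith)
      have h4 : lam * k * t - Real.log C ≤ Real.log S := by
        have h5 := Real.log_le_log (by positivity) h3
        rwa [Real.log_div (Real.exp_ne_zero _) (ne_of_gt hCpos), Real.log_exp] at h5
      have h6 : (1 / (k:ℝ)) * (lam * k * t - Real.log C) ≤ (1 / (k:ℝ)) * Real.log S :=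
        mul_le_mul_of_nonneg_left h4 (by positivity)
      calc lam * t - Real.log C / k
          = (1 / (k:ℝ)) * (lam * (k:ℝ) * t - Real.log C) := by
            field_simp
        _ ≤ (1 / (k:ℝ)) * Real.log S := h6
        _ = v k := rfl
    · have h0 : (∫ x in Ap, Q^[k] (fun _ => (1:ℝ)) x ∂m) = 0 := integral_undef hSk
      have : v k = 0 := by
        simp [hv, h0]
      rw [this]
      have h7 : 0 ≤ Real.log C / k := div_nonneg hlogC hk0.le
      linarith
  have htend : Tendsto (fun k : ℕ => lam * t - Real.log C / k) atTop (𝓝 (lam * t)) := by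
    have h8 := tendsto_const_div_atTop_nhds_zero_nat (Real.log C)
    simpa using tendsto_const_nhds.sub h8
  have hgoal : lam * t ≤ liminf v atTop := by
    by_cases hcob : IsCoboundedUnder (· ≥ ·) atTop v
    · have h1 : liminf (fun k : ℕ => lam * t - Real.log C / k) atTop ≤ liminf v atTop :=
        liminf_le_liminf hlow htend.isBoundedUnder_ge hcob
      rwa [htend.liminf_eq] at h1
    · have h2 : liminf v atTop = 0 := by
        rw [liminf_eq]
        apply Real.sSup_of_not_bddAbove
        intro ⟨b, hb⟩
        apply hcob
        refine ⟨b, fun a ha => ?_⟩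
        exact hb ha
      rw [h2]
      exact hTlam.le
  have : -liminf v atTop ≤ -(lam * t) := neg_le_neg hgoal
  calc -liminf v atTop ≤ -(lam * t) := this
    _ = -t * lam := by ring
end

section
/- Let $M = \mathbb{T}^1$, $F: \mathbb{T}^1 \to \mathbb{R}$ continuous with $F \ge 0$, and $\Phi^t$ the flow of $\dot{x} = F(x)$. Let $0 = x_0 < x_1 < \cdots < x_n = 1$ and $B_i = [x_{i-1}, x_i]$. Then the Ulam generator matrix satisfies $(A_n)_{i,i+1} = F(x_i)/m(B_{i+1})$, $(A_n)_{ii} = -F(x_i)/m(B_i)$, and $(A_n)_{ij} = 0$ otherwise (indices mod $n$), where $(A_n)_{ij} = \lim_{t\to 0^+} m(B_i \cap \Phi^{-t}B_j)/(t\, m(B_j))$ for $i\neq j$ and $(A_n)_{ii} = \lim_{t\to0^+}(m(B_i\cap\Phi^{-t}B_i)-m(B_i))/(t\,m(B_i))$. -/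
open MeasureTheory Filter Topology


section Helpers

lemma coe_sub_one (u : ℝ) : ((u - 1 : ℝ) : AddCircle (1:ℝ)) = (u:ℝ) := by
  have := AddCircle.coe_add_period 1 (u - 1)
  rw [sub_add_cancel] at this
  exact this.symm

lemma mem_img_iff {c d u : ℝ} (hc : 0 ≤ c) (hd : d ≤ 1) (hu₁ : -1 < u) (hu₂ : u < 2) :
    ((u:ℝ) : AddCircle (1:ℝ)) ∈ (fun y : ℝ => (y : AddCircle (1:ℝ))) '' Set.Ico c d ↔
      (u ∈ Set.Ico (c-1) (d-1) ∨ u ∈ Set.Ico c d ∨ u ∈ Set.Ico (c+1) (d+1)) := by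
  constructor
  · rintro ⟨y, hy, hqy⟩
    have h0 : ((u - y : ℝ) : AddCircle (1:ℝ)) = 0 := by
      rw [AddCircle.coe_sub, ← hqy, sub_self]
    obtain ⟨k, hk⟩ := (AddCircle.coe_eq_zero_iff (1:ℝ)).1 h0
    have hk' : (k : ℝ) = u - y := by rw [← hk, zsmul_eq_mul, mul_one]
    have hy0 : 0 ≤ y := le_trans hc hy.1
    have hy1 : y < 1 := lt_of_lt_of_le hy.2 hd
    have hk1' : (-2 : ℤ) < k := by exact_mod_cast show (-2:ℝ) < (k:ℝ) by linarith
    have hk2' : k < 2 := by exact_mod_cast show ((k:ℝ)) < 2 by linarith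
    interval_cases k
    · left
      push_cast at hk'
      exact ⟨by linarith [hy.1], by linarith [hy.2]⟩
    · right; left
      push_cast at hk'
      exact ⟨by linarith [hy.1], by linarith [hy.2]⟩
    · right; right
      push_cast at hk'
      exact ⟨by linarith [hy.1], by linarith [hy.2]⟩
  · rintro (h | h | h)
    · exact ⟨u + 1, ⟨by linarith [h.1], by linarith [h.2]⟩, AddCircle.coe_add_period 1 u⟩
    · exact ⟨u, h, rfl⟩
    · exact ⟨u - 1, ⟨by linarith [h.1], by linarith [h.2]⟩, coe_sub_one u⟩

lemma meas_img {c d : ℝ} (hcd : c < d) :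
    MeasurableSet ((fun y : ℝ => (y : AddCircle (1:ℝ))) '' Set.Ico c d) := by
  have h : Set.Ico c d = insert c (Set.Ioo c d) := (Set.Ioo_insert_left hcd).symm
  rw [h, Set.image_insert_eq]
  refine (MeasurableSet.insert ?_ _)
  have : IsOpen ((fun y : ℝ => (y : AddCircle (1:ℝ))) '' Set.Ioo c d) :=
    QuotientAddGroup.isOpenMap_coe _ isOpen_Ioo
  exact this.measurableSet

lemma vol_img {c d : ℝ} (hc : 0 ≤ c) (hcd : c ≤ d) (hd : d ≤ 1) :
    volume ((fun y : ℝ => (y : AddCircle (1:ℝ))) '' Set.Ico c d) = ENNReal.ofReal (d - c) := by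
  rcases eq_or_lt_of_le hcd with rfl | hlt
  · simp
  have hproj := AddCircle.add_projection_respects_measure (1:ℝ) (d - 1) (meas_img hlt)
  rw [hproj]
  have hIoc : d - 1 + 1 = d := by ring
  rw [hIoc]
  set U := (fun y : ℝ => (y : AddCircle (1:ℝ))) '' Set.Ico c d with hU
  have hsub1 : Set.Ioo c d ⊆ QuotientAddGroup.mk ⁻¹' U ∩ Set.Ioc (d-1) d := by
    intro x hx
    refine ⟨⟨x, ⟨hx.1.le, hx.2⟩, rfl⟩, ⟨by linarith [hx.1], hx.2.le⟩⟩
  have hsub2 : QuotientAddGroup.mk ⁻¹' U ∩ Set.Ioc (d-1) d ⊆ insert c (insert d (Set.Ioo c d)) := by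
    rintro x ⟨hxU, hx1, hx2⟩
    have hx1' : -1 < x := by linarith
    have hx2' : x < 2 := by linarith
    have := (mem_img_iff hc hd hx1' hx2').1 hxU
    rcases this with h | h | h
    · exfalso; linarith [h.2]
    · rcases eq_or_lt_of_le h.1 with rfl | hlt2
      · exact Set.mem_insert _ _
      · exact Set.mem_insert_of_mem _ (Set.mem_insert_of_mem _ ⟨hlt2, h.2⟩)
    · have : x = d := le_antisymm hx2 (by linarith [h.1])
      exact Set.mem_insert_of_mem _ (this ▸ Set.mem_insert _ _)
  refine le_antisymm ?_ ?_
  · calc volume (QuotientAddGroup.mk ⁻¹' U ∩ Set.Ioc (d-1) d)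
        ≤ volume (insert c (insert d (Set.Ioo c d))) := measure_mono hsub2
      _ ≤ volume {c} + (volume {d} + volume (Set.Ioo c d)) := by
          rw [Set.insert_eq, Set.insert_eq]
          exact le_trans (measure_union_le _ _) (by gcongr; exact measure_union_le _ _)
      _ = ENNReal.ofReal (d - c) := by
          simp [Real.volume_singleton, Real.volume_Ioo]
  · calc ENNReal.ofReal (d - c) = volume (Set.Ioo c d) := Real.volume_Ioo.symm
      _ ≤ _ := measure_mono hsub1

lemma toReal_vol_le {X : Set (AddCircle (1:ℝ))} {c d : ℝ} (hc : 0 ≤ c) (hcd : c ≤ d) (hd : d ≤ 1)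
    (hsub : X ⊆ (fun y : ℝ => (y : AddCircle (1:ℝ))) '' Set.Ico c d) :
    (volume X).toReal ≤ d - c := by
  have h := measure_mono (μ := (volume : Measure (AddCircle (1:ℝ)))) hsub
  rw [vol_img hc hcd hd] at h
  calc (volume X).toReal ≤ (ENNReal.ofReal (d - c)).toReal :=
        ENNReal.toReal_mono ENNReal.ofReal_ne_top h
    _ = d - c := ENNReal.toReal_ofReal (by linarith)

lemma le_toReal_vol {X : Set (AddCircle (1:ℝ))} {c d : ℝ} (hc : 0 ≤ c) (hcd : c ≤ d) (hd : d ≤ 1)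
    (hsub : (fun y : ℝ => (y : AddCircle (1:ℝ))) '' Set.Ico c d ⊆ X) :
    d - c ≤ (volume X).toReal := by
  have h := measure_mono (μ := (volume : Measure (AddCircle (1:ℝ)))) hsub
  rw [vol_img hc hcd hd] at h
  calc d - c = (ENNReal.ofReal (d - c)).toReal := (ENNReal.toReal_ofReal (by linarith)).symm
    _ ≤ (volume X).toReal := ENNReal.toReal_mono (measure_ne_top _ _) h

lemma tendsto_of_abs (f : ℝ → ℝ) (L : ℝ)
    (h : ∀ ε, 0 < ε → ∀ᶠ t in 𝓝[>](0:ℝ), |f t - L| ≤ ε) :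
    Filter.Tendsto f (𝓝[>](0:ℝ)) (𝓝 L) := by
  rw [Metric.tendsto_nhds]
  intro ε hε
  filter_upwards [h (ε/2) (by linarith)] with t ht
  rw [Real.dist_eq]
  linarith

end Helpers


lemma flow_mono (F : ℝ → ℝ) (φ : ℝ → ℝ → ℝ) (hFpos : ∀ x, 0 ≤ F x)
    (hφode : ∀ x t, HasDerivAt (fun s => φ s x) (F (φ t x)) t) (x : ℝ) :
    Monotone (fun s => φ s x) := by
  apply monotone_of_deriv_nonneg
  · exact fun s => (hφode x s).differentiableAt
  · intro s
    rw [(hφode x s).deriv]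
    exact hFpos _

lemma flow_le (F : ℝ → ℝ) (φ : ℝ → ℝ → ℝ) (hφ0 : ∀ x, φ 0 x = x)
    (hφode : ∀ x t, HasDerivAt (fun s => φ s x) (F (φ t x)) t)
    {C : ℝ} (hbd : ∀ x, F x ≤ C) (x : ℝ) {t : ℝ} (ht : 0 ≤ t) :
    φ t x ≤ x + C * t := by
  have h : ∀ s, HasDerivAt (fun s => φ s x - C * s) (F (φ s x) - C) s := by
    intro s
    exact (hφode x s).sub (by simpa using (hasDerivAt_id s).const_mul C)
  have hanti : Antitone (fun s => φ s x - C * s) := by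
    apply antitone_of_deriv_nonpos
    · exact fun s => (h s).differentiableAt
    · intro s
      rw [(h s).deriv]
      linarith [hbd (φ s x)]
  have := hanti ht
  simp only [hφ0, mul_zero, sub_zero] at this
  linarith

lemma flow_loc (F : ℝ → ℝ) (φ : ℝ → ℝ → ℝ) (hφ0 : ∀ x, φ 0 x = x)
    (hφode : ∀ x t, HasDerivAt (fun s => φ s x) (F (φ t x)) t)
    {x t L U : ℝ} (ht : 0 ≤ t)
    (hL : ∀ s ∈ Set.Icc 0 t, L ≤ F (φ s x)) (hU : ∀ s ∈ Set.Icc 0 t, F (φ s x) ≤ U) :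
    x + t * L ≤ φ t x ∧ φ t x ≤ x + t * U := by
  rcases eq_or_lt_of_le ht with rfl | htpos
  · simp [hφ0]
  have hint : interior (Set.Icc (0:ℝ) t) = Set.Ioo 0 t := interior_Icc
  constructor
  · have h : ∀ s, HasDerivAt (fun s => φ s x - L * s) (F (φ s x) - L) s := fun s =>
      (hφode x s).sub (by simpa using (hasDerivAt_id s).const_mul L)
    have hmono : MonotoneOn (fun s => φ s x - L * s) (Set.Icc 0 t) := by
      apply monotoneOn_of_deriv_nonneg (convex_Icc 0 t)
      · exact Continuous.continuousOn (by
          have : Differentiable ℝ (fun s => φ s x - L * s) := fun s => (h s).differentiableAt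
          exact this.continuous)
      · exact fun s _ => ((h s).differentiableAt).differentiableWithinAt
      · intro s hs
        rw [hint] at hs
        rw [(h s).deriv]
        linarith [hL s ⟨hs.1.le, hs.2.le⟩]
    have := hmono (Set.left_mem_Icc.2 ht) (Set.right_mem_Icc.2 ht) ht
    simp only [hφ0, mul_zero, sub_zero] at this
    linarith
  · have h : ∀ s, HasDerivAt (fun s => φ s x - U * s) (F (φ s x) - U) s := fun s =>
      (hφode x s).sub (by simpa using (hasDerivAt_id s).const_mul U)
    have hanti : AntitoneOn (fun s => φ s x - U * s) (Set.Icc 0 t) := by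
      apply antitoneOn_of_deriv_nonpos (convex_Icc 0 t)
      · exact Continuous.continuousOn (by
          have : Differentiable ℝ (fun s => φ s x - U * s) := fun s => (h s).differentiableAt
          exact this.continuous)
      · exact fun s _ => ((h s).differentiableAt).differentiableWithinAt
      · intro s hs
        rw [hint] at hs
        rw [(h s).deriv]
        linarith [hU s ⟨hs.1.le, hs.2.le⟩]
    have := hanti (Set.left_mem_Icc.2 ht) (Set.right_mem_Icc.2 ht) ht
    simp only [hφ0, mul_zero, sub_zero] at this
    linarith

lemma exists_bound (F : ℝ → ℝ) (hFcont : Continuous F) (hFper : Function.Periodic F 1)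
    (hFpos : ∀ x, 0 ≤ F x) : ∃ C, 0 ≤ C ∧ ∀ x, F x ≤ C := by
  obtain ⟨z, hz, hmax'⟩ := isCompact_Icc.exists_isMaxOn (Set.nonempty_Icc.2 zero_le_one)
    hFcont.continuousOn
  have hmax : ∀ w ∈ Set.Icc (0:ℝ) 1, F w ≤ F z := fun w hw => hmax' hw
  refine ⟨F z, hFpos z, fun x => ?_⟩
  have h1 : F (x - ⌊x⌋ * 1) = F x := hFper.sub_int_mul_eq ⌊x⌋
  rw [mul_one] at h1
  rw [← h1]
  exact hmax _ ⟨by linarith [Int.floor_le x], by linarith [Int.lt_floor_add_one x]⟩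


section Key
variable {F : ℝ → ℝ} {φ : ℝ → ℝ → ℝ} {C : ℝ}

lemma key_estimate (hFcont : Continuous F) (hFpos : ∀ x, 0 ≤ F x)
    (hC : 0 ≤ C)
    (hmono : ∀ x, Monotone (fun s => φ s x))
    (hle : ∀ x, ∀ {t : ℝ}, 0 ≤ t → φ t x ≤ x + C * t)
    (hloc : ∀ {x t L U : ℝ}, 0 ≤ t → (∀ s ∈ Set.Icc 0 t, L ≤ F (φ s x)) →
      (∀ s ∈ Set.Icc 0 t, F (φ s x) ≤ U) → x + t * L ≤ φ t x ∧ φ t x ≤ x + t * U)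
    (hφ0 : ∀ x, φ 0 x = x)
    {a b : ℝ} (hab : a < b) {ε : ℝ} (hε : 0 < ε) :
    ∃ t₀ > 0, ∀ t, 0 < t → t < t₀ →
      t * (F b + ε) < b - a ∧
      ∀ y ∈ Set.Ico a b,
        (b ≤ φ t y → b - t * (F b + ε) ≤ y) ∧ (b - t * (F b - ε) ≤ y → b ≤ φ t y) := by
  obtain ⟨δ, hδpos, hδ⟩ := Metric.continuousAt_iff.1 (hFcont.continuousAt (x := b)) ε hε
  have hFb : 0 ≤ F b := hFpos b
  refine ⟨min (min (δ / (2 * (C + 1))) (δ / (2 * (F b + ε + 1)))) ((b - a) / (F b + ε + 1)),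
    lt_min (lt_min (by positivity) (by positivity)) (div_pos (by linarith) (by positivity)),
    fun t ht ht₀ => ?_⟩
  have h1 : t < δ / (2 * (C + 1)) := lt_of_lt_of_le ht₀ (le_trans (min_le_left _ _) (min_le_left _ _))
  have h2 : t < δ / (2 * (F b + ε + 1)) := lt_of_lt_of_le ht₀ (le_trans (min_le_left _ _) (min_le_right _ _))
  have h3 : t < (b - a) / (F b + ε + 1) := lt_of_lt_of_le ht₀ (min_le_right _ _)
  have hCt : C * t < δ / 2 := by
    have := (lt_div_iff₀ (by positivity : (0:ℝ) < 2 * (C + 1))).1 h1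
    nlinarith
  have hFt : t * (F b + ε) < δ / 2 := by
    have := (lt_div_iff₀ (by positivity : (0:ℝ) < 2 * (F b + ε + 1))).1 h2
    nlinarith
  have hba : t * (F b + ε) < b - a := by
    have := (lt_div_iff₀ (by positivity : (0:ℝ) < F b + ε + 1)).1 h3
    nlinarith
  refine ⟨hba, fun y hy => ?_⟩
  -- local bounds on F along the trajectory, valid for y close to b
  have hlocF : ∀ y, b - δ/2 ≤ y → y < b → ∀ s ∈ Set.Icc (0:ℝ) t,
      F b - ε ≤ F (φ s y) ∧ F (φ s y) ≤ F b + ε := by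
    intro y hy1 hy2 s hs
    have hylb : y ≤ φ s y := by
      simpa [hφ0] using hmono y hs.1
    have hyub : φ s y ≤ y + C * s := hle y hs.1
    have hCs : C * s ≤ C * t := mul_le_mul_of_nonneg_left hs.2 hC
    have hdist : dist (φ s y) b < δ := by
      rw [Real.dist_eq, abs_lt]
      constructor <;> nlinarith
    have := hδ hdist
    rw [Real.dist_eq, abs_lt] at this
    exact ⟨by linarith [this.1], by linarith [this.2]⟩
  constructor
  · intro hby
    by_contra hcon
    push_neg at hcon
    rcases lt_or_ge y (b - δ/2) with hyfar | hynear
    · have := hle y ht.le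
      linarith [hby]
    · have hU : ∀ s ∈ Set.Icc (0:ℝ) t, F (φ s y) ≤ F b + ε :=
        fun s hs => (hlocF y hynear hy.2 s hs).2
      have hL : ∀ s ∈ Set.Icc (0:ℝ) t, F b - ε ≤ F (φ s y) :=
        fun s hs => (hlocF y hynear hy.2 s hs).1
      have := (hloc ht.le hL hU).2
      nlinarith
  · intro hyge
    have hpos : 0 < t * (F b - ε) := by linarith [hy.2]
    have hynear : b - δ/2 ≤ y := by nlinarith [hy.2]
    have hU : ∀ s ∈ Set.Icc (0:ℝ) t, F (φ s y) ≤ F b + ε :=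
      fun s hs => (hlocF y hynear hy.2 s hs).2
    have hL : ∀ s ∈ Set.Icc (0:ℝ) t, F b - ε ≤ F (φ s y) :=
      fun s hs => (hlocF y hynear hy.2 s hs).1
    have := (hloc ht.le hL hU).1
    linarith

end Key

section Limits
variable {F : ℝ → ℝ} {φ : ℝ → ℝ → ℝ} {C : ℝ}

lemma limit_succ (hFcont : Continuous F) (hFpos : ∀ x, 0 ≤ F x)
    (hC : 0 ≤ C)
    (hmono : ∀ x, Monotone (fun s => φ s x))
    (hle : ∀ x, ∀ {t : ℝ}, 0 ≤ t → φ t x ≤ x + C * t)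
    (hloc : ∀ {x t L U : ℝ}, 0 ≤ t → (∀ s ∈ Set.Icc 0 t, L ≤ F (φ s x)) →
      (∀ s ∈ Set.Icc 0 t, F (φ s x) ≤ U) → x + t * L ≤ φ t x ∧ φ t x ≤ x + t * U)
    (hφ0 : ∀ x, φ 0 x = x)
    {a b : ℝ} (ha : 0 ≤ a) (hab : a < b) (hb : b ≤ 1) :
    Filter.Tendsto (fun t => (volume ((fun y : ℝ => (y : AddCircle (1:ℝ))) ''
      {y : ℝ | y ∈ Set.Ico a b ∧ b ≤ φ t y})).toReal / t) (𝓝[>] (0:ℝ)) (𝓝 (F b)) := by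
  apply tendsto_of_abs
  intro ε hε
  obtain ⟨t₀, ht₀, hkey⟩ := key_estimate hFcont hFpos hC hmono hle hloc hφ0 hab hε
  filter_upwards [Ioo_mem_nhdsGT_of_mem (Set.left_mem_Ico.2 ht₀)] with t ht
  obtain ⟨hba, hyy⟩ := hkey t ht.1 ht.2
  have hFb : 0 ≤ F b := hFpos b
  have htFε : 0 ≤ t * (F b + ε) := mul_nonneg ht.1.le (by linarith)
  set V := (volume ((fun y : ℝ => (y : AddCircle (1:ℝ))) ''
      {y : ℝ | y ∈ Set.Ico a b ∧ b ≤ φ t y})).toReal with hV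
  have hVle : V ≤ t * (F b + ε) := by
    have hsub : {y : ℝ | y ∈ Set.Ico a b ∧ b ≤ φ t y} ⊆ Set.Ico (b - t * (F b + ε)) b :=
      fun y hy => ⟨(hyy y hy.1).1 hy.2, hy.1.2⟩
    have := toReal_vol_le (by linarith) (by linarith) hb (Set.image_mono hsub)
    linarith
  have hVge : t * (F b - ε) ≤ V := by
    rcases le_or_gt (F b - ε) 0 with h | h
    · have h0 : 0 ≤ V := ENNReal.toReal_nonneg
      nlinarith [ht.1]
    · have hmm : t * (F b - ε) ≤ t * (F b + ε) := by nlinarith [ht.1]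
      have hsub : Set.Ico (b - t * (F b - ε)) b ⊆
          {y : ℝ | y ∈ Set.Ico a b ∧ b ≤ φ t y} := by
        intro y hy
        have hya : a < y := by linarith [hy.1]
        have hmem : y ∈ Set.Ico a b := ⟨hya.le, hy.2⟩
        exact ⟨hmem, (hyy y hmem).2 hy.1⟩
      have := le_toReal_vol (c := b - t * (F b - ε)) (d := b) (by linarith)
        (by nlinarith [ht.1]) hb (Set.image_mono hsub)
      linarith
  have h1 : V / t ≤ F b + ε := by
    rw [div_le_iff₀ ht.1]
    linarith [mul_comm t (F b + ε)]
  have h2 : F b - ε ≤ V / t := by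
    rw [le_div_iff₀ ht.1]
    linarith [mul_comm t (F b - ε)]
  rw [abs_le]
  constructor <;> linarith

lemma limit_diag (hFcont : Continuous F) (hFpos : ∀ x, 0 ≤ F x)
    (hC : 0 ≤ C)
    (hmono : ∀ x, Monotone (fun s => φ s x))
    (hle : ∀ x, ∀ {t : ℝ}, 0 ≤ t → φ t x ≤ x + C * t)
    (hloc : ∀ {x t L U : ℝ}, 0 ≤ t → (∀ s ∈ Set.Icc 0 t, L ≤ F (φ s x)) →
      (∀ s ∈ Set.Icc 0 t, F (φ s x) ≤ U) → x + t * L ≤ φ t x ∧ φ t x ≤ x + t * U)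
    (hφ0 : ∀ x, φ 0 x = x)
    {a b : ℝ} (ha : 0 ≤ a) (hab : a < b) (hb : b ≤ 1) :
    Filter.Tendsto (fun t => ((volume ((fun y : ℝ => (y : AddCircle (1:ℝ))) ''
      {y : ℝ | y ∈ Set.Ico a b ∧ φ t y < b})).toReal - (b - a)) / t)
      (𝓝[>] (0:ℝ)) (𝓝 (-F b)) := by
  apply tendsto_of_abs
  intro ε hε
  obtain ⟨t₀, ht₀, hkey⟩ := key_estimate hFcont hFpos hC hmono hle hloc hφ0 hab hε
  filter_upwards [Ioo_mem_nhdsGT_of_mem (Set.left_mem_Ico.2 ht₀)] with t ht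
  obtain ⟨hba, hyy⟩ := hkey t ht.1 ht.2
  have hFb : 0 ≤ F b := hFpos b
  have htFε : 0 ≤ t * (F b + ε) := mul_nonneg ht.1.le (by linarith)
  set V := (volume ((fun y : ℝ => (y : AddCircle (1:ℝ))) ''
      {y : ℝ | y ∈ Set.Ico a b ∧ φ t y < b})).toReal with hV
  have hVge : (b - a) - t * (F b + ε) ≤ V := by
    have hsub : Set.Ico a (b - t * (F b + ε)) ⊆
        {y : ℝ | y ∈ Set.Ico a b ∧ φ t y < b} := by
      intro y hy
      have hmem : y ∈ Set.Ico a b := ⟨hy.1, by linarith [hy.2]⟩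
      refine ⟨hmem, ?_⟩
      by_contra hcon
      push_neg at hcon
      have := (hyy y hmem).1 hcon
      linarith [hy.2]
    have := le_toReal_vol (c := a) (d := b - t * (F b + ε)) ha (by linarith) (by linarith)
      (Set.image_mono hsub)
    linarith
  have hVle : V ≤ (b - a) - t * (F b - ε) := by
    have hsub : {y : ℝ | y ∈ Set.Ico a b ∧ φ t y < b} ⊆
        Set.Ico a (min b (b - t * (F b - ε))) := by
      rintro y ⟨hmem, hlt⟩
      refine ⟨hmem.1, lt_min hmem.2 ?_⟩
      by_contra hcon
      push_neg at hcon
      exact absurd ((hyy y hmem).2 hcon) (by linarith)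
    have hmm : t * (F b - ε) ≤ t * (F b + ε) := by nlinarith [ht.1]
    have h1 : a ≤ min b (b - t * (F b - ε)) := le_min hab.le (by linarith)
    have h2 : min b (b - t * (F b - ε)) ≤ 1 := le_trans (min_le_left _ _) hb
    have := toReal_vol_le ha h1 h2 (Set.image_mono hsub)
    have h3 : min b (b - t * (F b - ε)) ≤ b - t * (F b - ε) := min_le_right _ _
    linarith
  have h1 : (V - (b - a)) / t ≤ -(F b) + ε := by
    rw [div_le_iff₀ ht.1]
    linarith [mul_comm t (F b - ε), mul_comm (-(F b) + ε) t]
  have h2 : -(F b) - ε ≤ (V - (b - a)) / t := by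
    rw [le_div_iff₀ ht.1]
    linarith [mul_comm t (F b + ε), mul_comm (-(F b) - ε) t]
  rw [abs_le]
  constructor <;> [linarith; linarith]
end Limits


/-- Ulam's method for the generator in one dimension: for the flow of `ẋ = F(x)` with
`F ≥ 0` on the circle and the partition `B_i = [x_{i-1}, x_i]`, the matrix entries
`(A_n)_{ij} = lim_{t→0⁺} m(B_i ∩ Φ⁻ᵗ B_j)/(t m(B_j))` (for `i ≠ j`) and
`(A_n)_{ii} = lim_{t→0⁺} (m(B_i ∩ Φ⁻ᵗ B_i) - m(B_i))/(t m(B_i))` satisfy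
`(A_n)_{i,i+1} = F(x_i)/m(B_{i+1})`, `(A_n)_{ii} = -F(x_i)/m(B_i)` and `(A_n)_{ij} = 0`
otherwise (indices mod `n`). -/
theorem stmt13 {n : ℕ} [NeZero n] (hn : 1 < n)
    (F : ℝ → ℝ) (hFcont : Continuous F) (hFper : Function.Periodic F 1)
    (hFpos : ∀ x, 0 ≤ F x)
    (φ : ℝ → ℝ → ℝ) (hφ0 : ∀ x, φ 0 x = x)
    (hφode : ∀ x t, HasDerivAt (fun s => φ s x) (F (φ t x)) t)
    (Φ : ℝ → AddCircle (1:ℝ) → AddCircle (1:ℝ))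
    (hΦ : ∀ (t : ℝ) (x : ℝ), Φ t (x : AddCircle (1:ℝ)) = ((φ t x : ℝ) : AddCircle (1:ℝ)))
    (xs : Fin (n + 1) → ℝ) (hxs : StrictMono xs)
    (hxs0 : xs 0 = 0) (hxs1 : xs (Fin.last n) = 1)
    (B : Fin n → Set (AddCircle (1:ℝ)))
    (hB : ∀ i : Fin n,
      B i = (fun y : ℝ => (y : AddCircle (1:ℝ))) '' Set.Ico (xs i.castSucc) (xs i.succ)) :
    ∀ i j : Fin n,
      (i ≠ j →
        Tendsto (fun t : ℝ =>
            (volume (B i ∩ (Φ t) ⁻¹' (B j))).toReal / (t * (volume (B j)).toReal))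
          (𝓝[>] (0:ℝ))
          (𝓝 (if j = i + 1 then F (xs i.succ) / (volume (B j)).toReal else 0))) ∧
      Tendsto (fun t : ℝ =>
          ((volume (B i ∩ (Φ t) ⁻¹' (B i))).toReal - (volume (B i)).toReal)
            / (t * (volume (B i)).toReal))
        (𝓝[>] (0:ℝ)) (𝓝 (-F (xs i.succ) / (volume (B i)).toReal)) := by
  obtain ⟨C, hC0, hCbd⟩ := exists_bound F hFcont hFper hFpos
  have hmono := flow_mono F φ hFpos hφode
  have hle : ∀ x : ℝ, ∀ {t : ℝ}, 0 ≤ t → φ t x ≤ x + C * t :=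
    fun x {t} ht => flow_le F φ hφ0 hφode hCbd x ht
  have hloc : ∀ {x t L U : ℝ}, 0 ≤ t → (∀ s ∈ Set.Icc 0 t, L ≤ F (φ s x)) →
      (∀ s ∈ Set.Icc 0 t, F (φ s x) ≤ U) → x + t * L ≤ φ t x ∧ φ t x ≤ x + t * U :=
    fun {x t L U} ht hL hU => flow_loc F φ hφ0 hφode ht hL hU
  have hmon : ∀ p q : Fin (n+1), (p:ℕ) ≤ (q:ℕ) → xs p ≤ xs q :=
    fun p q h => hxs.monotone (by rwa [Fin.le_def])
  have hlt : ∀ p q : Fin (n+1), (p:ℕ) < (q:ℕ) → xs p < xs q :=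
    fun p q h => hxs (by rwa [Fin.lt_def])
  have h0le : ∀ p : Fin (n+1), 0 ≤ xs p := by
    intro p
    rw [← hxs0]
    exact hmon 0 p (by simp)
  have hle1 : ∀ p : Fin (n+1), xs p ≤ 1 := by
    intro p
    rw [← hxs1]
    exact hmon p (Fin.last n) (by simpa [Fin.val_last] using Nat.le_of_lt_succ p.isLt)
  have habk : ∀ k : Fin n, xs k.castSucc < xs k.succ :=
    fun k => hlt _ _ (by simp [Fin.coe_castSucc, Fin.val_succ])
  have hBvol : ∀ k : Fin n, (volume (B k)).toReal = xs k.succ - xs k.castSucc := by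
    intro k
    rw [hB k, vol_img (h0le _) (habk k).le (hle1 _)]
    exact ENNReal.toReal_ofReal (by linarith [habk k])
  have hsmall : ∀ w : ℝ, 0 < w → ∀ᶠ t in 𝓝[>](0:ℝ), C * t < w := by
    intro w hw
    filter_upwards [Ioo_mem_nhdsGT_of_mem
      (Set.left_mem_Ico.2 (div_pos hw (by linarith : (0:ℝ) < C + 1)))] with t ht
    have h := (lt_div_iff₀ (by linarith : (0:ℝ) < C + 1)).1 ht.2
    nlinarith [ht.1]
  intro i j
  set a := xs i.castSucc with ha_def
  set b := xs i.succ with hb_def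
  have hI : (i:ℕ) < n := i.isLt
  have hab : a < b := habk i
  have ha0 : 0 ≤ a := h0le _
  have hb1 : b ≤ 1 := hle1 _
  have hival_lt : (i:ℕ) + 1 < n → ((i + 1 : Fin n) : ℕ) = (i:ℕ) + 1 := by
    intro h
    rw [Fin.val_add, Fin.val_one', Nat.mod_eq_of_lt hn, Nat.mod_eq_of_lt h]
  have hival_eq : (i:ℕ) + 1 = n → ((i + 1 : Fin n) : ℕ) = 0 := by
    intro h
    rw [Fin.val_add, Fin.val_one', Nat.mod_eq_of_lt hn, h, Nat.mod_self]
  -- set identity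
  have hset : ∀ (k : Fin n) (t : ℝ), B i ∩ (Φ t) ⁻¹' (B k) =
      (fun y : ℝ => (y : AddCircle (1:ℝ))) ''
        {y : ℝ | y ∈ Set.Ico a b ∧ ((φ t y : ℝ) : AddCircle (1:ℝ)) ∈ B k} := by
    intro k t
    ext z
    constructor
    · rintro ⟨hzB, hzΦ⟩
      rw [hB i] at hzB
      obtain ⟨y, hy, rfl⟩ := hzB
      refine ⟨y, ⟨hy, ?_⟩, rfl⟩
      rw [← hΦ t y]
      exact hzΦ
    · rintro ⟨y, ⟨hy, hφy⟩, rfl⟩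
      refine ⟨by rw [hB i]; exact ⟨y, hy, rfl⟩, ?_⟩
      rw [Set.mem_preimage, hΦ t y]
      exact hφy
  -- the membership condition
  have hcond : ∀ k : Fin n, ∀ᶠ t in 𝓝[>](0:ℝ), ∀ y ∈ Set.Ico a b,
      (((φ t y : ℝ) : AddCircle (1:ℝ)) ∈ B k ↔
        (if k = i then φ t y < b else if k = i + 1 then b ≤ φ t y else False)) := by
    intro k
    have hw1 : (0:ℝ) < 1 - xs ⟨n-1, by omega⟩ := by
      have := hlt ⟨n-1, by omega⟩ (Fin.last n) (by simp [Fin.val_last]; omega)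
      rw [hxs1] at this
      linarith
    have hw2 : (0:ℝ) < xs ⟨1, by omega⟩ := by
      have := hlt 0 ⟨1, by omega⟩ (by simp)
      rwa [hxs0] at this
    have hw3 : (0:ℝ) < xs k.succ - xs k.castSucc := by linarith [habk k]
    have hw4 : (0:ℝ) < xs (i+1).succ - xs (i+1).castSucc := by linarith [habk (i+1)]
    filter_upwards [hsmall _ hw1, hsmall _ hw2, hsmall _ hw3, hsmall _ hw4,
      self_mem_nhdsWithin] with t H1 H2 H3 H4 htpos
    intro y hy
    have ht0 : (0:ℝ) ≤ t := (Set.mem_Ioi.1 htpos).le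
    have hu1 : y ≤ φ t y := by simpa [hφ0] using hmono y ht0
    have hu2 : φ t y ≤ y + C * t := hle y ht0
    have hxn1 : xs ⟨n-1, by omega⟩ ≤ 1 := hle1 _
    have hxn0 : (0:ℝ) ≤ xs ⟨n-1, by omega⟩ := h0le _
    have hCt0 : 0 ≤ C * t := mul_nonneg hC0 ht0
    have hCt1 : C * t < 1 := by linarith
    have hc0 : 0 ≤ xs k.castSucc := h0le _
    have hd1 : xs k.succ ≤ 1 := hle1 _
    have hya : a ≤ y := hy.1
    have hyb : y < b := hy.2
    rw [hB k, mem_img_iff hc0 hd1 (by linarith) (by linarith)]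
    have hnot1 : ¬ (φ t y ∈ Set.Ico (xs k.castSucc - 1) (xs k.succ - 1)) := by
      rintro ⟨_, h2⟩
      linarith
    by_cases hki : k = i
    · subst hki
      rw [if_pos rfl]
      constructor
      · rintro (h | h | h)
        · exact absurd h hnot1
        · exact h.2
        · exfalso
          rcases Nat.lt_or_ge ((k:ℕ)+1) n with hcase | hcase
          · have hble : b ≤ xs ⟨n-1, by omega⟩ := by
              rw [hb_def]
              exact hmon _ _ (by rw [Fin.val_succ]; show (k:ℕ)+1 ≤ n-1; omega)
            linarith [h.1]
          · have hbeq : b = 1 := by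
              rw [hb_def, show k.succ = Fin.last n from
                Fin.ext (by rw [Fin.val_succ, Fin.val_last]; omega), hxs1]
            have hage : xs ⟨1, by omega⟩ ≤ a := by
              rw [ha_def]
              exact hmon _ _ (by rw [Fin.coe_castSucc]; show 1 ≤ (k:ℕ); omega)
            have hca : xs k.castSucc = a := ha_def.symm
            linarith [h.1]
      · intro hlt'
        refine Or.inr (Or.inl ⟨?_, ?_⟩)
        · rw [← ha_def]; linarith
        · rw [← hb_def]; exact hlt'
    · rw [if_neg hki]
      by_cases hki1 : k = i + 1
      · subst hki1
        rw [if_pos rfl]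
        rcases Nat.lt_or_ge ((i:ℕ)+1) n with hcase | hcase
        · -- no wrap
          have hcb : xs (i+1:Fin n).castSucc = b := by
            rw [hb_def]
            congr 1
            exact Fin.ext (by rw [Fin.coe_castSucc, Fin.val_succ, hival_lt hcase])
          constructor
          · rintro (h | h | h)
            · exact absurd h hnot1
            · rw [hcb] at h; exact h.1
            · exfalso; rw [hcb] at h; linarith [h.1]
          · intro hbu
            refine Or.inr (Or.inl ⟨by rw [hcb]; exact hbu, ?_⟩)
            rw [hcb] at H3
            linarith
        · -- wrap
          have hiv : (i:ℕ) + 1 = n := by omega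
          have hjv : ((i + 1 : Fin n) : ℕ) = 0 := hival_eq hiv
          have hceq : xs (i+1:Fin n).castSucc = 0 := by
            rw [show (i+1:Fin n).castSucc = (0 : Fin (n+1)) from
              Fin.ext (by rw [Fin.coe_castSucc, hjv]; rfl)]
            exact hxs0
          have hbeq : b = 1 := by
            rw [hb_def, show i.succ = Fin.last n from
              Fin.ext (by rw [Fin.val_succ, Fin.val_last]; omega), hxs1]
          have hda : xs (i+1:Fin n).succ ≤ a := by
            rw [ha_def]
            exact hmon _ _ (by rw [Fin.val_succ, Fin.coe_castSucc, hjv]; omega)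
          constructor
          · rintro (h | h | h)
            · exact absurd h hnot1
            · exfalso; linarith [h.2]
            · rw [hceq] at h
              rw [hbeq]
              linarith [h.1]
          · intro hbu
            refine Or.inr (Or.inr ⟨by rw [hceq]; linarith [hbeq ▸ hbu], ?_⟩)
            rw [hceq] at H4
            rw [hbeq] at hyb
            linarith
      · -- k ≠ i, k ≠ i+1 : empty
        rw [if_neg hki1]
        have hKne : (k:ℕ) ≠ (i:ℕ) := fun h => hki (Fin.ext h)
        constructor
        · rintro (h | h | h)
          · exact hnot1 h
          · rcases Nat.lt_or_ge (k:ℕ) (i:ℕ) with hlt' | hge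
            · have hda : xs k.succ ≤ a := by
                rw [ha_def]
                exact hmon _ _ (by rw [Fin.val_succ, Fin.coe_castSucc]; omega)
              linarith [h.2]
            · have hKgt : (i:ℕ) + 1 < (k:ℕ) := by
                rcases Nat.lt_or_ge ((i:ℕ)+1) n with hc2 | hc2
                · have := hival_lt hc2
                  have hne := hki1
                  have : (k:ℕ) ≠ (i:ℕ) + 1 := by
                    intro hh
                    exact hne (Fin.ext (by rw [hival_lt hc2]; exact hh))
                  omega
                · have hiv : (i:ℕ) + 1 = n := by omega
                  omega
              have hcase : (i:ℕ) + 1 < n := by omega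
              have hcge : xs ⟨(i:ℕ)+2, by omega⟩ ≤ xs k.castSucc :=
                hmon _ _ (by rw [Fin.coe_castSucc]; show (i:ℕ)+2 ≤ (k:ℕ); omega)
              have hb' : xs (i+1:Fin n).castSucc = b := by
                rw [hb_def]
                congr 1
                exact Fin.ext (by rw [Fin.coe_castSucc, Fin.val_succ, hival_lt hcase])
              have hd' : xs (i+1:Fin n).succ = xs ⟨(i:ℕ)+2, by omega⟩ := by
                congr 1
                exact Fin.ext (by rw [Fin.val_succ, hival_lt hcase])
              rw [hb', hd'] at H4
              linarith [h.1]
          · rcases Nat.lt_or_ge (k:ℕ) (i:ℕ) with hlt' | hge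
            · rcases Nat.lt_or_ge ((i:ℕ)+1) n with hcase | hcase
              · have hble : b ≤ xs ⟨n-1, by omega⟩ := by
                  rw [hb_def]
                  exact hmon _ _ (by rw [Fin.val_succ]; show (i:ℕ)+1 ≤ n-1; omega)
                linarith [h.1]
              · have hbeq : b = 1 := by
                  rw [hb_def, show i.succ = Fin.last n from
                    Fin.ext (by rw [Fin.val_succ, Fin.val_last]; omega), hxs1]
                have hK1 : 1 ≤ (k:ℕ) := by
                  by_contra hcon
                  have hk0 : (k:ℕ) = 0 := by omega
                  exact hki1 (Fin.ext (by rw [hival_eq (by omega)]; exact hk0))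
                have hcge : xs ⟨1, by omega⟩ ≤ xs k.castSucc :=
                  hmon _ _ (by rw [Fin.coe_castSucc]; show 1 ≤ (k:ℕ); omega)
                linarith [h.1]
            · have hKgt : (i:ℕ) + 1 < (k:ℕ) := by
                rcases Nat.lt_or_ge ((i:ℕ)+1) n with hc2 | hc2
                · have : (k:ℕ) ≠ (i:ℕ) + 1 := by
                    intro hh
                    exact hki1 (Fin.ext (by rw [hival_lt hc2]; exact hh))
                  omega
                · omega
              have hcase : (i:ℕ) + 1 < n := by omega
              have hcge : xs ⟨(i:ℕ)+2, by omega⟩ ≤ xs k.castSucc :=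
                hmon _ _ (by rw [Fin.coe_castSucc]; show (i:ℕ)+2 ≤ (k:ℕ); omega)
              have hb' : xs (i+1:Fin n).castSucc = b := by
                rw [hb_def]
                congr 1
                exact Fin.ext (by rw [Fin.coe_castSucc, Fin.val_succ, hival_lt hcase])
              have hd' : xs (i+1:Fin n).succ = xs ⟨(i:ℕ)+2, by omega⟩ := by
                congr 1
                exact Fin.ext (by rw [Fin.val_succ, hival_lt hcase])
              rw [hb', hd'] at H4
              linarith [h.1]
        · exact False.elim
  constructor
  · -- off-diagonal
    intro hij
    by_cases hji1 : j = i + 1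
    · rw [if_pos hji1]
      have hlim := limit_succ hFcont hFpos hC0 hmono hle hloc hφ0 ha0 hab hb1
      have hdiv := hlim.div_const ((volume (B j)).toReal)
      refine Tendsto.congr' ?_ hdiv
      filter_upwards [hcond j] with t hcondt
      have hsame : {y : ℝ | y ∈ Set.Ico a b ∧ b ≤ φ t y} =
          {y : ℝ | y ∈ Set.Ico a b ∧ ((φ t y : ℝ) : AddCircle (1:ℝ)) ∈ B j} := by
        ext y
        simp only [Set.mem_setOf_eq]
        constructor
        · rintro ⟨h1, h2⟩
          refine ⟨h1, ?_⟩
          rw [hcondt y h1, if_neg (fun h => hij h.symm), if_pos hji1]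
          exact h2
        · rintro ⟨h1, h2⟩
          rw [hcondt y h1, if_neg (fun h => hij h.symm), if_pos hji1] at h2
          exact ⟨h1, h2⟩
      rw [hset j t, ← hsame, div_div]
    · rw [if_neg hji1]
      refine Tendsto.congr' ?_ tendsto_const_nhds
      filter_upwards [hcond j] with t hcondt
      have hempty : B i ∩ (Φ t) ⁻¹' (B j) = (∅ : Set (AddCircle (1:ℝ))) := by
        rw [hset j t]
        have : {y : ℝ | y ∈ Set.Ico a b ∧ ((φ t y : ℝ) : AddCircle (1:ℝ)) ∈ B j} = ∅ := by
          ext y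
          simp only [Set.mem_setOf_eq, Set.mem_empty_iff_false, iff_false]
          rintro ⟨h1, h2⟩
          rw [hcondt y h1, if_neg (fun h => hij h.symm), if_neg hji1] at h2
          exact h2
        rw [this, Set.image_empty]
      rw [hempty]
      simp
  · -- diagonal
    have hlim := limit_diag hFcont hFpos hC0 hmono hle hloc hφ0 ha0 hab hb1
    have hdiv := hlim.div_const ((volume (B i)).toReal)
    have hm : (volume (B i)).toReal = b - a := by rw [hBvol i, ← ha_def, ← hb_def]
    have hval : -F b / (volume (B i)).toReal = -F b / (volume (B i)).toReal := rfl
    refine Tendsto.congr' ?_ hdiv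
    filter_upwards [hcond i] with t hcondt
    have hsame : {y : ℝ | y ∈ Set.Ico a b ∧ φ t y < b} =
        {y : ℝ | y ∈ Set.Ico a b ∧ ((φ t y : ℝ) : AddCircle (1:ℝ)) ∈ B i} := by
      ext y
      simp only [Set.mem_setOf_eq]
      constructor
      · rintro ⟨h1, h2⟩
        refine ⟨h1, ?_⟩
        rw [hcondt y h1, if_pos rfl]
        exact h2
      · rintro ⟨h1, h2⟩
        rw [hcondt y h1, if_pos rfl] at h2
        exact ⟨h1, h2⟩
    rw [hset i t, ← hsame, hm, div_div]
end
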